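/- Let ⊳ be the proper subterm relation on first-order terms and ≻ a reduction order (a well-founded order closed under contexts and substitutions). Then the relation ≻_st defined as the transitive closure of (≻ ∪ ⊳) is well-founded. -/

import Mathlib

/-- First-order terms over signature `F` with variables `V`. -/
inductive Term (F V : Type) : Type where
  | var : V → Term F V
  | app : F → List (Term F V) → Term F V

namespace Term

variable {F V : Type}

mutual
/-- Application of a substitution to a term. -/
def subst (σ : V → Term F V) : Term F V → Term F V
  | .var x => σ x
  | .app f ts => .app f (substList σ ts)

/-- Application of a substitution to a list of terms. -/
def substList (σ : V → Term F V) : List (Term F V) → List (Term F V)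
  | [] => []
  | t :: ts => t.subst σ :: substList σ ts
end

/-- `t.HasVar x` means the variable `x` occurs in `t`. -/
inductive HasVar : Term F V → V → Prop where
  | var : ∀ x, HasVar (.var x) x
  | app : ∀ {f ts t x}, t ∈ ts → HasVar t x → HasVar (.app f ts) x

/-- `DirectSubterm t s`: `t` is an immediate subterm (argument) of `s`. -/
def DirectSubterm (t s : Term F V) : Prop :=
  ∃ f ts, s = Term.app f ts ∧ t ∈ ts

/-- `ProperSubterm t s`: `t` is a proper subterm of `s` (so `s ⊳ t`). -/
def ProperSubterm : Term F V → Term F V → Prop :=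
  Relation.TransGen DirectSubterm

/-- Reflexive subterm relation: `Subterm t s` iff `s ⊵ t`. -/
def Subterm : Term F V → Term F V → Prop :=
  Relation.ReflTransGen DirectSubterm

/-- Subterm of `t` at position `p`, if any. -/
def subtermAt : Term F V → List ℕ → Option (Term F V)
  | t, [] => some t
  | .var _, _ :: _ => none
  | .app _ ts, i :: p =>
    match ts[i]? with
    | some t => t.subtermAt p
    | none => none

/-- Replace the subterm at position `p` by `u`, if the position exists. -/
def replaceAt : Term F V → List ℕ → Term F V → Option (Term F V)
  | _, [], u => some u
  | .var _, _ :: _, _ => none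
  | .app f ts, i :: p, u =>
    match ts[i]? with
    | some t => (t.replaceAt p u).map (fun t' => Term.app f (ts.set i t'))
    | none => none

end Term

/-- A rewrite relation is closed under contexts if it is closed under
placing both sides in the same argument position of a function application. -/
def ClosedUnderCtx {F V : Type} (r : Term F V → Term F V → Prop) : Prop :=
  ∀ (f : F) (ts₁ ts₂ : List (Term F V)) (s t : Term F V),
    r s t → r (Term.app f (ts₁ ++ s :: ts₂)) (Term.app f (ts₁ ++ t :: ts₂))

/-- Closure under substitutions. -/
def ClosedUnderSubst {F V : Type} (r : Term F V → Term F V → Prop) : Prop :=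
  ∀ (s t : Term F V) (σ : V → Term F V), r s t → r (s.subst σ) (t.subst σ)

/-- `a` is a normal form of `r` if it has no `r`-successor. -/
def NormalForm {A : Type} (r : A → A → Prop) (a : A) : Prop :=
  ∀ b, ¬ r a b

/-- A substitution is normalized if it maps every variable to a normal form. -/
def NormalizedSubst {F V : Type} (r : Term F V → Term F V → Prop)
    (σ : V → Term F V) : Prop :=
  ∀ x, NormalForm r (σ x)

/-- A term is strongly irreducible w.r.t. `r` if all its instances by
normalized substitutions are normal forms. -/
def StronglyIrreducible {F V : Type} (r : Term F V → Term F V → Prop)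
    (t : Term F V) : Prop :=
  ∀ σ, NormalizedSubst r σ → NormalForm r (t.subst σ)

/-- Joinability. -/
def Joinable {A : Type} (r : A → A → Prop) (t u : A) : Prop :=
  ∃ v, Relation.ReflTransGen r t v ∧ Relation.ReflTransGen r u v

/-- Confluence. -/
def Confluent {A : Type} (r : A → A → Prop) : Prop :=
  ∀ s t u, Relation.ReflTransGen r s t → Relation.ReflTransGen r s u →
    Joinable r t u

/-- Every term is accessible under the direct-subterm relation. -/
theorem acc_directSubterm {F V : Type} (t : Term F V) : Acc Term.DirectSubterm t := by
  induction t using Term.rec (motive_2 := fun ts => ∀ u ∈ ts, Acc Term.DirectSubterm u) with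
  | var x => exact ⟨_, fun y ⟨f, ts, h, _⟩ => by cases h⟩
  | app f ts ih =>
    refine ⟨_, fun y ⟨g, us, h, hmem⟩ => ?_⟩
    cases h; exact ih y hmem
  | nil => rename_i h; cases h
  | cons t ts iht ihts =>
    rename_i u h
    rcases List.mem_cons.1 h with rfl | h
    · exact iht
    · exact ihts u h

theorem succ_of_direct_step {F V : Type} {succ : Term F V → Term F V → Prop}
    (hctx : ClosedUnderCtx succ) {s t u : Term F V}
    (h : Term.DirectSubterm t s) (hsucc : succ t u) :
    ∃ s', succ s s' ∧ Term.DirectSubterm u s' := by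
  obtain ⟨f, ts, rfl, hmem⟩ := h
  obtain ⟨ts₁, ts₂, rfl⟩ := List.append_of_mem hmem
  exact ⟨.app f (ts₁ ++ u :: ts₂), hctx f ts₁ ts₂ t u hsucc,
    f, _, rfl, List.mem_append.2 (Or.inr List.mem_cons_self)⟩

theorem succ_of_proper_step {F V : Type} {succ : Term F V → Term F V → Prop}
    (hctx : ClosedUnderCtx succ) {s t u : Term F V}
    (h : Term.ProperSubterm t s) (hsucc : succ t u) :
    ∃ s', succ s s' ∧ Term.ProperSubterm u s' := by
  induction h with
  | single h =>
    obtain ⟨s', h1, h2⟩ := succ_of_direct_step hctx h hsucc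
    exact ⟨s', h1, Relation.TransGen.single h2⟩
  | tail _ hlast ih =>
    obtain ⟨m', h1, h2⟩ := ih
    obtain ⟨s', h3, h4⟩ := succ_of_direct_step hctx hlast h1
    exact ⟨s', h3, h2.trans (Relation.TransGen.single h4)⟩

/-- For a reduction order `≻` (well-founded, transitive, irreflexive, closed
under contexts and substitutions), the relation `≻_st = (≻ ∪ ⊳)⁺` is
well-founded. -/
theorem wf_redOrd_union_subterm {F V : Type}
    (succ : Term F V → Term F V → Prop)
    (hwf : WellFounded (fun t s => succ s t))
    (htrans : Transitive succ)
    (hirr : Irreflexive succ)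
    (hctx : ClosedUnderCtx succ)
    (hsubst : ClosedUnderSubst succ) :
    WellFounded (Relation.TransGen
      (fun t s => succ s t ∨ Term.ProperSubterm t s)) := by

  have wfD : WellFounded (Term.DirectSubterm (F := F) (V := V)) := ⟨acc_directSubterm⟩
  set R : Term F V → Term F V → Prop :=
    fun t s => succ s t ∨ Term.ProperSubterm t s with hR
  have key : ∀ s, Acc R s := by
    intro s
    induction s using hwf.induction with
    | _ s H =>
      -- H : every succ-successor of s is accessible
      have sub : ∀ t, Term.ProperSubterm t s → Acc R t := by
        intro t
        induction t using wfD.induction with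
        | _ t IH =>
          intro hts
          refine ⟨t, fun y hy => ?_⟩
          rcases hy with hy | hy
          · -- succ t y : commute
            obtain ⟨s', h1, h2⟩ := succ_of_proper_step hctx hts hy
            exact (H s' h1).inv (Or.inr h2)
          · -- y proper subterm of t
            obtain ⟨b, hyb, hbt⟩ := Relation.TransGen.tail'_iff.1 hy
            have hacc : Acc R b :=
              IH b hbt ((Relation.TransGen.single hbt).trans hts)
            rcases (Relation.reflTransGen_iff_eq_or_transGen.1 hyb) with rfl | hyb'
            · exact hacc
            · exact hacc.inv (Or.inr hyb')
      refine ⟨s, fun y hy => ?_⟩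
      rcases hy with hy | hy
      · exact H y hy
      · exact sub y hy
  exact (WellFounded.intro key).transGen
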